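/- Let G be a weighted undirected graph partitioned into subgraphs with boundary sets B_i. Call b ∈ B_i a half-connected boundary vertex if it has a neighbor in G_i that is not a boundary vertex, and full-connected otherwise (all its neighbors in G_i are boundary vertices). Let G̃' be the pruned overlay graph containing: for each partition i, edges among all pairs of half-connected boundary vertices of B_i (with weight equal to the inserted boundary-pair distance used in the boundary strategy), all inter-partition edges of G, and all original adjacent edges of each full-connected boundary vertex within its partition. Then for all boundary vertices b_s, b_t ∈ B, d_G(b_s, b_t) = d_{G̃'}(b_s, b_t). -/

import Mathlib

open scoped ENNReal Classical

namespace PSP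

/-- A weighted undirected graph: symmetric adjacency and a weight function
with values in `ℝ≥0∞` (so weights are non-negative). -/
structure WGraph (V : Type*) where
  Adj : V → V → Prop
  symm : ∀ {u v}, Adj u v → Adj v u
  w : V → V → ℝ≥0∞

variable {V : Type*} {ι : Type*}

/-- Sum of `f` over consecutive pairs of a list. -/
noncomputable def pairSum (f : V → V → ℝ≥0∞) : List V → ℝ≥0∞
  | a :: b :: rest => f a b + pairSum f (b :: rest)
  | _ => 0

/-- Weighted length of a walk (given as a list of vertices). -/
noncomputable def wlen (G : WGraph V) (l : List V) : ℝ≥0∞ := pairSum G.w l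

/-- `l` is a walk in `G` from `s` to `t`: consecutive vertices are adjacent,
the first vertex is `s` and the last is `t`. -/
def IsWalk (G : WGraph V) (s t : V) (l : List V) : Prop :=
  l.Chain' G.Adj ∧ l.head? = some s ∧ l.getLast? = some t

/-- Shortest-path distance in `G` (`⊤` if no walk exists). -/
noncomputable def dist (G : WGraph V) (s t : V) : ℝ≥0∞ :=
  sInf {x | ∃ l, IsWalk G s t l ∧ wlen G l = x}

/-- Induced subgraph on a vertex set `S`. -/
def induce (G : WGraph V) (S : Set V) : WGraph V where
  Adj u v := G.Adj u v ∧ u ∈ S ∧ v ∈ S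
  symm h := ⟨G.symm h.1, h.2.2, h.2.1⟩
  w := G.w

/-- A partition of the vertex set is given by a function `P : V → ι`
assigning each vertex its partition index. The set of all boundary
vertices: vertices having a neighbor in another partition. -/
def bdry (G : WGraph V) (P : V → ι) : Set V :=
  {v | ∃ u, G.Adj v u ∧ P u ≠ P v}

/-- Boundary vertices of partition `i`. -/
def bdryIn (G : WGraph V) (P : V → ι) (i : ι) : Set V :=
  {v | P v = i ∧ ∃ u, G.Adj v u ∧ P u ≠ i}

/-- The induced subgraph `G_i` of partition `i`. -/
def partGraph (G : WGraph V) (P : V → ι) (i : ι) : WGraph V :=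
  induce G {x | P x = i}

/-- The No-Boundary overlay graph `G̃`: vertices are boundary vertices; for each
partition, each boundary pair gets an edge of weight equal to the *local*
partition distance; inter-partition edges of `G` keep their original weight. -/
noncomputable def overlay (G : WGraph V) (P : V → ι) : WGraph V where
  Adj u v := (P u = P v ∧ u ∈ bdry G P ∧ v ∈ bdry G P) ∨ (P u ≠ P v ∧ G.Adj u v)
  symm := by
    rintro u v (⟨h1, h2, h3⟩ | ⟨h1, h2⟩)
    · exact Or.inl ⟨h1.symm, h3, h2⟩
    · exact Or.inr ⟨fun h => h1 h.symm, G.symm h2⟩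
  w u v := if P u = P v then dist (partGraph G P (P u)) u v else G.w u v

/-- A half-connected boundary vertex: has a non-boundary neighbor in its own partition. -/
def halfC (G : WGraph V) (P : V → ι) (b : V) : Prop :=
  b ∈ bdry G P ∧ ∃ u, G.Adj b u ∧ P u = P b ∧ u ∉ bdry G P

/-- A full-connected boundary vertex: all in-partition neighbors are boundary vertices. -/
def fullC (G : WGraph V) (P : V → ι) (b : V) : Prop :=
  b ∈ bdry G P ∧ ∀ u, G.Adj b u → P u = P b → u ∈ bdry G P

/-- The pruned overlay graph `G̃'`, with inserted boundary-pair weights `ω`: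
edges among half-connected boundary pairs of the same partition (weight `ω`),
all inter-partition edges, and the original in-partition adjacent edges of
full-connected boundary vertices. -/
noncomputable def pruned (G : WGraph V) (P : V → ι) (ω : V → V → ℝ≥0∞) : WGraph V where
  Adj u v :=
    (P u = P v ∧ halfC G P u ∧ halfC G P v) ∨
    (P u ≠ P v ∧ G.Adj u v) ∨
    (P u = P v ∧ G.Adj u v ∧ u ∈ bdry G P ∧ v ∈ bdry G P ∧ (fullC G P u ∨ fullC G P v))
  symm := by
    rintro u v (⟨h1, h2, h3⟩ | ⟨h1, h2⟩ | ⟨h1, h2, h3, h4, h5⟩)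
    · exact Or.inl ⟨h1.symm, h3, h2⟩
    · exact Or.inr (Or.inl ⟨fun h => h1 h.symm, G.symm h2⟩)
    · exact Or.inr (Or.inr ⟨h1.symm, G.symm h2, h4, h3, h5.symm⟩)
  w u v := if P u = P v ∧ halfC G P u ∧ halfC G P v then ω u v else G.w u v

/-- The augmented partition graph `G'_i`: the induced subgraph `G_i` plus, for each
boundary pair `b₁ b₂ ∈ B_i`, an inserted edge of weight `ω b₁ b₂` (taking the
minimum with an already-existing edge weight). -/
noncomputable def augment (G : WGraph V) (P : V → ι) (i : ι) (ω : V → V → ℝ≥0∞) : WGraph V where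
  Adj u v := (G.Adj u v ∧ P u = i ∧ P v = i) ∨ (u ∈ bdryIn G P i ∧ v ∈ bdryIn G P i)
  symm := by
    rintro u v (⟨h1, h2, h3⟩ | ⟨h1, h2⟩)
    · exact Or.inl ⟨G.symm h1, h3, h2⟩
    · exact Or.inr ⟨h2, h1⟩
  w u v :=
    if u ∈ bdryIn G P i ∧ v ∈ bdryIn G P i then
      (if G.Adj u v ∧ P u = i ∧ P v = i then min (ω u v) (G.w u v) else ω u v)
    else G.w u v

/-- Graph obtained from `G` by adding, for every pair `u v ∈ S`, a shortcut edge
of weight `dist G u v` (taking the minimum with an already-existing edge weight). -/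
noncomputable def shortcut (G : WGraph V) (S : Set V) : WGraph V where
  Adj u v := G.Adj u v ∨ (u ∈ S ∧ v ∈ S)
  symm := by
    rintro u v (h | ⟨h1, h2⟩)
    · exact Or.inl (G.symm h)
    · exact Or.inr ⟨h2, h1⟩
  w u v :=
    if u ∈ S ∧ v ∈ S then
      (if G.Adj u v then min (dist G u v) (G.w u v) else dist G u v)
    else G.w u v

/-- Vertex-splitting construction: each cut vertex `x ∈ X` keeps its neighbors in
group `N x 0`; for `1 ≤ i ≤ l x` a duplicate `(x, i)` is created, connected to the
vertices of `N x i` with the original weights and to `x` by a zero-weight edge. -/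
noncomputable def split (G : WGraph V) (X : Set V) (N : V → ℕ → Set V) (l : V → ℕ) :
    WGraph (V ⊕ V × ℕ) where
  Adj a b := match a, b with
    | .inl u, .inl v => G.Adj u v ∧ (u ∈ X → v ∈ N u 0) ∧ (v ∈ X → u ∈ N v 0)
    | .inl v, .inr (x, i) => x ∈ X ∧ 1 ≤ i ∧ i ≤ l x ∧ ((G.Adj x v ∧ v ∈ N x i) ∨ v = x)
    | .inr (x, i), .inl v => x ∈ X ∧ 1 ≤ i ∧ i ≤ l x ∧ ((G.Adj x v ∧ v ∈ N x i) ∨ v = x)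
    | .inr _, .inr _ => False
  symm := by
    rintro (u | ⟨x, i⟩) (v | ⟨y, j⟩) h
    · exact ⟨G.symm h.1, h.2.2, h.2.1⟩
    · exact h
    · exact h
    · exact h.elim
  w a b := match a, b with
    | .inl u, .inl v => G.w u v
    | .inl v, .inr (x, _) => if v = x then 0 else G.w x v
    | .inr (x, _), .inl v => if v = x then 0 else G.w x v
    | .inr _, .inr _ => 0


lemma dist_le_wlen {G : WGraph V} {s t : V} {l : List V} (h : IsWalk G s t l) :
    dist G s t ≤ wlen G l := sInf_le ⟨l, h, rfl⟩

lemma isWalk_single (G : WGraph V) (s : V) : IsWalk G s s [s] :=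
  ⟨List.isChain_singleton s, rfl, rfl⟩

lemma dist_self_le (G : WGraph V) (s : V) : dist G s s ≤ 0 := by
  have := dist_le_wlen (isWalk_single G s)
  simpa [wlen, pairSum] using this

lemma isWalk_pair {G : WGraph V} {u v : V} (h : G.Adj u v) : IsWalk G u v [u, v] :=
  ⟨List.isChain_pair.mpr h, rfl, rfl⟩

lemma wlen_pair (G : WGraph V) (u v : V) : wlen G [u, v] = G.w u v := by
  simp [wlen, pairSum]

lemma dist_le_w {G : WGraph V} {u v : V} (h : G.Adj u v) : dist G u v ≤ G.w u v := by
  simpa [wlen_pair] using dist_le_wlen (isWalk_pair h)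

lemma pairSum_append (f : V → V → ℝ≥0∞) :
    ∀ {l₁ : List V} {v : V}, l₁.getLast? = some v → ∀ l₂ : List V,
    pairSum f (l₁ ++ l₂) = pairSum f l₁ + pairSum f (v :: l₂)
  | [], v, h, _ => by simp at h
  | [a], v, h, l₂ => by
      simp only [List.getLast?_singleton, Option.some.injEq] at h
      subst h
      cases l₂ <;> simp [pairSum]
  | a :: b :: r, v, h, l₂ => by
      rw [List.getLast?_cons_cons] at h
      show pairSum f (a :: b :: (r ++ l₂)) = pairSum f (a :: b :: r) + _
      rw [pairSum, pairSum]
      have := pairSum_append f (l₁ := b :: r) h l₂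
      rw [show (b :: r) ++ l₂ = b :: (r ++ l₂) from rfl] at this
      rw [this, add_assoc]

lemma IsWalk.append {G : WGraph V} {s u t : V} {l₁ l₂ : List V}
    (h₁ : IsWalk G s u l₁) (h₂ : IsWalk G u t l₂) :
    IsWalk G s t (l₁ ++ l₂.tail) ∧ wlen G (l₁ ++ l₂.tail) = wlen G l₁ + wlen G l₂ := by
  obtain ⟨c₁, hh₁, hl₁⟩ := h₁
  obtain ⟨c₂, hh₂, hl₂⟩ := h₂
  obtain ⟨r, rfl⟩ : ∃ r, l₂ = u :: r := by
    cases l₂ with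
    | nil => simp at hh₂
    | cons a r => simp at hh₂; exact ⟨r, by rw [hh₂]⟩
  have hl₁' : l₁ ≠ [] := by rintro rfl; simp at hl₁
  constructor
  · refine ⟨?_, ?_, ?_⟩
    · refine List.isChain_append.mpr ?_
      refine ⟨c₁, (List.isChain_cons.mp c₂).2, ?_⟩
      intro x hx y hy
      rw [hl₁] at hx; simp at hx; subst hx
      exact (List.isChain_cons.mp c₂).1 y hy
    · cases l₁ with
      | nil => exact absurd rfl hl₁'
      | cons a m => simpa using hh₁
    · show (l₁ ++ r).getLast? = some t
      cases r with
      | nil =>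
        have : u = t := by simpa using hl₂
        subst this
        simpa using hl₁
      | cons b r' =>
        rw [List.getLast?_append]
        rw [List.getLast?_cons_cons] at hl₂
        simp [hl₂]
  · show pairSum G.w (l₁ ++ r) = pairSum G.w l₁ + pairSum G.w (u :: r)
    exact pairSum_append G.w hl₁ r

lemma le_sInf_add_sInf {S T : Set ℝ≥0∞} {d : ℝ≥0∞}
    (h : ∀ a ∈ S, ∀ b ∈ T, d ≤ a + b) : d ≤ sInf S + sInf T := by
  rw [ENNReal.sInf_add]
  refine le_iInf₂ fun a ha => ?_
  rw [add_comm, ENNReal.sInf_add]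
  refine le_iInf₂ fun b hb => ?_
  rw [add_comm]
  exact h a ha b hb

lemma dist_triangle (G : WGraph V) (s u t : V) :
    dist G s t ≤ dist G s u + dist G u t := by
  refine le_sInf_add_sInf ?_
  rintro a ⟨l₁, h₁, rfl⟩ b ⟨l₂, h₂, rfl⟩
  obtain ⟨hw, he⟩ := h₁.append h₂
  rw [← he]
  exact dist_le_wlen hw

/-- If every edge of `H` dominates the `G`-distance, then `G`-distance ≤ `H`-distance. -/
lemma dist_le_dist_of_edge_le {G H : WGraph V}
    (h : ∀ u v, H.Adj u v → dist G u v ≤ H.w u v) (s t : V) :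
    dist G s t ≤ dist H s t := by
  refine le_sInf ?_
  rintro x ⟨l, hw, rfl⟩
  induction l generalizing s with
  | nil => simp [IsWalk] at hw
  | cons a m ih =>
    obtain ⟨c, hh, hl⟩ := hw
    have hh' : a = s := by simpa using hh
    subst hh'
    cases m with
    | nil =>
      have : a = t := by simpa using hl
      subst this
      simpa [wlen, pairSum] using dist_self_le G a
    | cons b r =>
      have hadj : H.Adj a b := (List.isChain_cons_cons.mp c).1
      have hw' : IsWalk H b t (b :: r) :=
        ⟨(List.isChain_cons_cons.mp c).2, rfl, by rwa [List.getLast?_cons_cons] at hl⟩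
      calc dist G a t ≤ dist G a b + dist G b t := dist_triangle G a b t
        _ ≤ H.w a b + wlen H (b :: r) := add_le_add (h a b hadj) (ih b hw')
        _ = wlen H (a :: b :: r) := by rw [wlen, wlen, pairSum]


section Aux
variable {V : Type*} {ι : Type*}

lemma bdry_halfC_or_fullC {G : WGraph V} {P : V → ι} {b : V} (hb : b ∈ bdry G P) :
    halfC G P b ∨ fullC G P b := by
  by_cases h : ∃ u, G.Adj b u ∧ P u = P b ∧ u ∉ bdry G P
  · exact Or.inl ⟨hb, h⟩
  · refine Or.inr ⟨hb, fun u hadj hpu => ?_⟩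
    by_contra hub
    exact h ⟨u, hadj, hpu, hub⟩

lemma not_halfC_fullC {G : WGraph V} {P : V → ι} {b : V}
    (h1 : halfC G P b) (h2 : fullC G P b) : False := by
  obtain ⟨_, u, hadj, hpu, hub⟩ := h1
  exact hub (h2.2 u hadj hpu)

lemma partGraph_adj {G : WGraph V} {P : V → ι} {u v : V} (hadj : G.Adj u v)
    (hu : P u = P u) (hv : P v = P u) : (partGraph G P (P u)).Adj u v := ⟨hadj, hu, hv⟩

lemma pruned_w_of_not {G : WGraph V} {P : V → ι} {ω : V → V → ℝ≥0∞} {u v : V}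
    (h : ¬(P u = P v ∧ halfC G P u ∧ halfC G P v)) :
    (pruned G P ω).w u v = G.w u v := by simp [pruned, h]

lemma pruned_w_of {G : WGraph V} {P : V → ι} {ω : V → V → ℝ≥0∞} {u v : V}
    (h : P u = P v ∧ halfC G P u ∧ halfC G P v) :
    (pruned G P ω).w u v = ω u v := by simp [pruned, h]

/-- Key lemma for the hard direction. -/
lemma key_induction {G : WGraph V} {P : V → ι} {ω : V → V → ℝ≥0∞}
    (hω : ∀ b1 b2 : V, P b1 = P b2 → b1 ∈ bdry G P → b2 ∈ bdry G P →
      dist G b1 b2 ≤ ω b1 b2 ∧ ω b1 b2 ≤ dist (partGraph G P (P b1)) b1 b2) :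
    ∀ n : ℕ,
      (∀ l s t, l.length = n → IsWalk G s t l → s ∈ bdry G P → t ∈ bdry G P →
        dist (pruned G P ω) s t ≤ wlen G l) ∧
      (∀ l s u t, l.length = n → IsWalk G u t l → s ∈ bdry G P → halfC G P s →
        t ∈ bdry G P → P u = P s → u ∉ bdry G P →
        dist (pruned G P ω) s t ≤ dist (partGraph G P (P s)) s u + wlen G l) := by
  intro n
  induction n using Nat.strong_induction_on with
  | _ n ih =>
    constructor
    · -- Part A
      intro l s t hlen hw hs ht
      obtain ⟨c, hh, hl⟩ := hw
      cases l with
      | nil => simp at hh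
      | cons a m =>
        have ha : a = s := by simpa using hh
        subst ha
        cases m with
        | nil =>
          have : a = t := by simpa using hl
          subst this
          simpa [wlen, pairSum] using dist_self_le (pruned G P ω) a
        | cons b r =>
          have hadj : G.Adj a b := (List.isChain_cons_cons.mp c).1
          have hw' : IsWalk G b t (b :: r) :=
            ⟨(List.isChain_cons_cons.mp c).2, rfl, by rwa [List.getLast?_cons_cons] at hl⟩
          have hwlen : wlen G (a :: b :: r) = G.w a b + wlen G (b :: r) := by
            rw [wlen, wlen, pairSum]
          have hltn : (b :: r).length < n := by simp at hlen ⊢; omega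
          by_cases hpb : P b = P a
          · by_cases hbb : b ∈ bdry G P
            · -- same-partition boundary edge
              have hIH := (ih _ hltn).1 (b :: r) b t rfl hw' hbb ht
              have hedge : (pruned G P ω).Adj a b ∧ (pruned G P ω).w a b ≤ G.w a b := by
                by_cases hhalf : halfC G P a ∧ halfC G P b
                · refine ⟨Or.inl ⟨hpb.symm, hhalf.1, hhalf.2⟩, ?_⟩
                  rw [pruned_w_of ⟨hpb.symm, hhalf.1, hhalf.2⟩]
                  have h1 := (hω a b hpb.symm hs hbb).2
                  have h2 : dist (partGraph G P (P a)) a b ≤ G.w a b :=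
                    dist_le_w (G := partGraph G P (P a)) ⟨hadj, rfl, hpb⟩
                  exact h1.trans h2
                · have hfull : fullC G P a ∨ fullC G P b := by
                    rcases bdry_halfC_or_fullC hs with h | h
                    · rcases bdry_halfC_or_fullC hbb with h' | h'
                      · exact absurd ⟨h, h'⟩ hhalf
                      · exact Or.inr h'
                    · exact Or.inl h
                  refine ⟨Or.inr (Or.inr ⟨hpb.symm, hadj, hs, hbb, hfull⟩), ?_⟩
                  rw [pruned_w_of_not (fun h => hhalf ⟨h.2.1, h.2.2⟩)]
              calc dist (pruned G P ω) a t
                  ≤ dist (pruned G P ω) a b + dist (pruned G P ω) b t :=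
                    dist_triangle _ a b t
                _ ≤ (pruned G P ω).w a b + wlen G (b :: r) :=
                    add_le_add (dist_le_w hedge.1) hIH
                _ ≤ G.w a b + wlen G (b :: r) := add_le_add_left hedge.2 _
                _ = wlen G (a :: b :: r) := hwlen.symm
            · -- b interior: a is half-connected
              have hhs : halfC G P a := ⟨hs, b, hadj, hpb, hbb⟩
              have hIH := (ih _ hltn).2 (b :: r) a b t rfl hw' hs hhs ht hpb hbb
              have h2 : dist (partGraph G P (P a)) a b ≤ G.w a b :=
                dist_le_w (G := partGraph G P (P a)) ⟨hadj, rfl, hpb⟩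
              calc dist (pruned G P ω) a t
                  ≤ dist (partGraph G P (P a)) a b + wlen G (b :: r) := hIH
                _ ≤ G.w a b + wlen G (b :: r) := add_le_add_left h2 _
                _ = wlen G (a :: b :: r) := hwlen.symm
          · -- inter-partition edge
            have hbb : b ∈ bdry G P := ⟨a, G.symm hadj, fun h => hpb h.symm⟩
            have hIH := (ih _ hltn).1 (b :: r) b t rfl hw' hbb ht
            have hedge : (pruned G P ω).Adj a b :=
              Or.inr (Or.inl ⟨fun h => hpb h.symm, hadj⟩)
            have hwe : (pruned G P ω).w a b = G.w a b :=
              pruned_w_of_not (fun h => hpb h.1.symm)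
            calc dist (pruned G P ω) a t
                ≤ dist (pruned G P ω) a b + dist (pruned G P ω) b t :=
                  dist_triangle _ a b t
              _ ≤ G.w a b + wlen G (b :: r) :=
                  add_le_add (hwe ▸ dist_le_w hedge) hIH
              _ = wlen G (a :: b :: r) := hwlen.symm
    · -- Part B
      intro l s u t hlen hw hs hhs ht hpu hub
      obtain ⟨c, hh, hl⟩ := hw
      cases l with
      | nil => simp at hh
      | cons a m =>
        have ha : a = u := by simpa using hh
        subst ha
        cases m with
        | nil =>
          have : a = t := by simpa using hl
          subst this
          exact absurd ht hub
        | cons v r =>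
          have hadj : G.Adj a v := (List.isChain_cons_cons.mp c).1
          have hw' : IsWalk G v t (v :: r) :=
            ⟨(List.isChain_cons_cons.mp c).2, rfl, by rwa [List.getLast?_cons_cons] at hl⟩
          have hwlen : wlen G (a :: v :: r) = G.w a v + wlen G (v :: r) := by
            rw [wlen, wlen, pairSum]
          have hltn : (v :: r).length < n := by simp at hlen ⊢; omega
          have hpv : P v = P a := by
            by_contra h
            exact hub ⟨v, hadj, h⟩
          have hpvs : P v = P s := hpv.trans hpu
          have hdv : dist (partGraph G P (P s)) s v ≤
              dist (partGraph G P (P s)) s a + G.w a v := by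
            refine (dist_triangle _ s a v).trans (add_le_add_right ?_ _)
            exact dist_le_w (G := partGraph G P (P s)) ⟨hadj, hpu, hpvs⟩
          by_cases hvb : v ∈ bdry G P
          · have hhv : halfC G P v := ⟨hvb, a, G.symm hadj, hpv.symm, hub⟩
            have hIH := (ih _ hltn).1 (v :: r) v t rfl hw' hvb ht
            have hedge : (pruned G P ω).Adj s v := Or.inl ⟨hpvs.symm, hhs, hhv⟩
            have hwe : (pruned G P ω).w s v = ω s v :=
              pruned_w_of ⟨hpvs.symm, hhs, hhv⟩
            have hωv : ω s v ≤ dist (partGraph G P (P s)) s v :=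
              (hω s v hpvs.symm hs hvb).2
            calc dist (pruned G P ω) s t
                ≤ dist (pruned G P ω) s v + dist (pruned G P ω) v t :=
                  dist_triangle _ s v t
              _ ≤ ω s v + wlen G (v :: r) :=
                  add_le_add (hwe ▸ dist_le_w hedge) hIH
              _ ≤ dist (partGraph G P (P s)) s v + wlen G (v :: r) :=
                  add_le_add_left hωv _
              _ ≤ (dist (partGraph G P (P s)) s a + G.w a v) + wlen G (v :: r) :=
                  add_le_add_left hdv _
              _ = dist (partGraph G P (P s)) s a + wlen G (a :: v :: r) := by
                  rw [hwlen, add_assoc]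
          · have hIH := (ih _ hltn).2 (v :: r) s v t rfl hw' hs hhs ht hpvs hvb
            calc dist (pruned G P ω) s t
                ≤ dist (partGraph G P (P s)) s v + wlen G (v :: r) := hIH
              _ ≤ (dist (partGraph G P (P s)) s a + G.w a v) + wlen G (v :: r) :=
                  add_le_add_left hdv _
              _ = dist (partGraph G P (P s)) s a + wlen G (a :: v :: r) := by
                  rw [hwlen, add_assoc]

end Aux

/-- Lemma 4, pruning-based overlay optimization: the pruned overlay
preserves all boundary-to-boundary distances.  The inserted weight `ω` is the
boundary-pair distance used by the boundary strategy, which lies between the global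
distance and the local partition distance. -/
theorem stmt6 {V ι : Type*} (G : WGraph V) (P : V → ι) (ω : V → V → ℝ≥0∞)
    (hω : ∀ b1 b2 : V, P b1 = P b2 → b1 ∈ bdry G P → b2 ∈ bdry G P →
      dist G b1 b2 ≤ ω b1 b2 ∧ ω b1 b2 ≤ dist (partGraph G P (P b1)) b1 b2)
    (bs bt : V) (h1 : bs ∈ bdry G P) (h2 : bt ∈ bdry G P) :
    dist G bs bt = dist (pruned G P ω) bs bt := by
  refine le_antisymm ?_ ?_
  · refine dist_le_dist_of_edge_le ?_ bs bt
    intro u v hadj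
    rcases hadj with ⟨hp, hu, hv⟩ | ⟨hp, hadj⟩ | ⟨hp, hadj, _, _, hf⟩
    · rw [pruned_w_of ⟨hp, hu, hv⟩]
      exact (hω u v hp hu.1 hv.1).1
    · rw [pruned_w_of_not (fun h => hp h.1)]
      exact dist_le_w hadj
    · rw [pruned_w_of_not ?_]
      · exact dist_le_w hadj
      · rintro ⟨_, hhu, hhv⟩
        rcases hf with h | h
        · exact not_halfC_fullC hhu h
        · exact not_halfC_fullC hhv h
  · refine le_sInf ?_
    rintro x ⟨l, hw, rfl⟩
    exact (key_induction hω l.length).1 l bs bt rfl hw h1 h2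

end PSP
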